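/- Let $g:\mathbb{R}^n\to\mathbb{R}^m$ be a piecewise linear function with associated polyhedra $P_1,\dots,P_T$ and matrices $A_1,\dots,A_T\in\mathbb{R}^{m\times n}$ such that $\mathbb{R}^n=\cup_{i=1}^{T}P_i$, each $P_i$ has nonempty interior, the interiors are pairwise disjoint, and $g(x)=A_ix$ for every $x\in P_i$. Then the Lipschitz constant of $g$ (with respect to Euclidean norms) equals the maximum operator norm of the pieces: $\|g\|_{\mathrm{Lip}}=\max_{i\in[T]}\|A_i\|_{\mathrm{op}}$. -/

import Mathlib

noncomputable section

open MeasureTheory ProbabilityTheory Finset Real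

/-- Matrices as plain functions. -/
abbrev Mat (m k : ℕ) : Type := Fin m → Fin k → ℝ

/-- The ReLU activation `σ(t) = max (0, t)`. -/
def relu (t : ℝ) : ℝ := max 0 t

/-- The derivative of ReLU, with the convention `σ'(0) = 0`. -/
def relu' (t : ℝ) : ℝ := if 0 < t then 1 else 0

/-- Squared Euclidean norm. -/
def sqnorm {m : ℕ} (x : Fin m → ℝ) : ℝ := ∑ i, (x i) ^ 2

/-- Euclidean norm. -/
def eunorm {m : ℕ} (x : Fin m → ℝ) : ℝ := Real.sqrt (sqnorm x)

/-- Feature maps of a ReLU network: `featureF n W x k = f_k(x)`, where `W l` is the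
weight matrix mapping layer `l` to layer `l+1` (i.e. the paper's `W_{l+1}ᵀ`), and
`n l` is the width of layer `l` (so `n 0 = d` is the input dimension). -/
def featureF (n : ℕ → ℕ) (W : ∀ l : ℕ, Mat (n l) (n (l+1))) (x : Fin (n 0) → ℝ) :
    (k : ℕ) → Fin (n k) → ℝ
  | 0 => x
  | (k+1) => fun j => relu (∑ i, W k i j * featureF n W x k i)

/-- Pre-activations: `preactF n W x k = g_{k+1}(x)`. -/
def preactF (n : ℕ → ℕ) (W : ∀ l : ℕ, Mat (n l) (n (l+1))) (x : Fin (n 0) → ℝ)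
    (k : ℕ) : Fin (n (k+1)) → ℝ :=
  fun j => ∑ i, W k i j * featureF n W x k i

/-- Zero-extension of a finite tuple of weight matrices to all layers. -/
def extW (n : ℕ → ℕ) (L : ℕ) (W : ∀ l : Fin L, Mat (n l) (n (l+1))) :
    ∀ l : ℕ, Mat (n l) (n (l+1)) :=
  fun l => if h : l < L then W ⟨l, h⟩ else fun _ _ => 0

/-- Backward vectors of the depth-`L` network: for `1 ≤ k ≤ L-1`,
`bvec n W x L k = Σ_k(x) (∏_{l=k+1}^{L-1} W_l Σ_l(x)) W_L ∈ ℝ^{n_k}`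
(in the paper's indexing), and `bvec n W x L L` is the all-ones vector. -/
def bvec (n : ℕ → ℕ) (W : ∀ l : ℕ, Mat (n l) (n (l+1))) (x : Fin (n 0) → ℝ) (L : ℕ) :
    (k : ℕ) → Fin (n k) → ℝ
  | 0 => fun _ => 0
  | (k+1) =>
    if _h : k + 1 < L then
      fun a => relu' (preactF n W x k a) * ∑ t, W (k+1) a t * bvec n W x L (k+2) t
    else fun _ => 1
termination_by k => L - k
decreasing_by omega

/-- `chain n W x k p = ∏_{l=k+1}^{p} W_l Σ_l(x)` (an `n_k × n_p` matrix, in the paper's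
indexing), with `chain n W x k k` the identity. -/
def chain (n : ℕ → ℕ) (W : ∀ l : ℕ, Mat (n l) (n (l+1))) (x : Fin (n 0) → ℝ) (k : ℕ) :
    (p : ℕ) → Fin (n k) → Fin (n p) → ℝ
  | 0 => fun i j => if h : k = 0 then (if Fin.cast (congrArg n h) i = j then 1 else 0) else 0
  | (p+1) =>
    if h : k = p + 1 then fun i j => if Fin.cast (congrArg n h) i = j then 1 else 0
    else fun i j => (∑ t, chain n W x k p i t * W p t j) * relu' (preactF n W x p j)

/-- The empirical NTK Gram matrix `J Jᵀ` of the depth-`L` network, where `J` is the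
Jacobian of the network outputs with respect to all the weights, computed by
back-propagation with the convention `σ'(0) = 0`; in closed form,
`(JJᵀ)_{ij} = ∑_{k=0}^{L-1} ⟨f_k(x_i), f_k(x_j)⟩ ⟨B_{k+1}(x_i), B_{k+1}(x_j)⟩`. -/
def ntkGram (n : ℕ → ℕ) (L : ℕ) (W : ∀ l : ℕ, Mat (n l) (n (l+1))) {N : ℕ}
    (X : Fin N → Fin (n 0) → ℝ) : Fin N → Fin N → ℝ :=
  fun i j => ∑ k ∈ Finset.range L,
    (∑ a, featureF n W (X i) k a * featureF n W (X j) k a) *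
    (∑ t, bvec n W (X i) L (k+1) t * bvec n W (X j) L (k+1) t)

/-- Law of a random matrix with iid `N(0, v)` entries. -/
def gaussMat (m k : ℕ) (v : NNReal) : Measure (Mat m k) :=
  Measure.pi fun _ : Fin m => Measure.pi fun _ : Fin k => gaussianReal 0 v

/-- Joint law of the first `L` weight matrices: `W l` (the paper's `W_{l+1}`) has iid
`N(0, (b (l+1))²)` entries, i.e. the paper's `W_l` has iid `N(0, (b l)²)` entries. -/
def weightLaw (n : ℕ → ℕ) (b : ℕ → NNReal) (L : ℕ) :
    Measure (∀ l : Fin L, Mat (n l) (n (l+1))) :=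
  Measure.pi fun l : Fin L => gaussMat (n l) (n (l+1)) (b ((l : ℕ) + 1) ^ 2)

/-- The standard Gaussian measure on `ℝ^m`. -/
def stdGauss (m : ℕ) : Measure (Fin m → ℝ) :=
  Measure.pi fun _ : Fin m => gaussianReal 0 1

/-- Quadratic form of a matrix. -/
def quadForm {N : ℕ} (M : Fin N → Fin N → ℝ) (v : Fin N → ℝ) : ℝ :=
  ∑ i, ∑ j, v i * M i j * v j

/-- The smallest eigenvalue of a symmetric matrix, as the infimum of its Rayleigh
quotient over unit vectors. -/
def lamMin {N : ℕ} (M : Fin N → Fin N → ℝ) : ℝ :=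
  sInf {t : ℝ | ∃ v : Fin N → ℝ, sqnorm v = 1 ∧ t = quadForm M v}

/-- The operator norm (largest singular value) of a matrix, w.r.t. Euclidean norms. -/
def opNorm {m k : ℕ} (A : Fin m → Fin k → ℝ) : ℝ :=
  sInf {c : ℝ | 0 ≤ c ∧ ∀ v : Fin k → ℝ, eunorm (fun i => ∑ j, A i j * v j) ≤ c * eunorm v}

/-- The Lipschitz constant of a map, w.r.t. Euclidean norms. -/
def lipC {m k : ℕ} (f : (Fin m → ℝ) → (Fin k → ℝ)) : ℝ :=
  sInf {c : ℝ | 0 ≤ c ∧ ∀ x y, eunorm (f x - f y) ≤ c * eunorm (x - y)}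

/-- Data-scaling assumption (Assumption 2.1) with explicit constants:
`∫‖x‖ dP = Θ(√d)`, `∫‖x‖² dP = Θ(d)`, `∫‖x - E x‖² dP = Ω(d)`. -/
def DataScaling (d : ℕ) (P : Measure (Fin d → ℝ)) (a1 a2 a3 a4 a5 : ℝ) : Prop :=
  a1 * Real.sqrt d ≤ (∫ x, eunorm x ∂P) ∧ (∫ x, eunorm x ∂P) ≤ a2 * Real.sqrt d ∧
  a3 * d ≤ (∫ x, sqnorm x ∂P) ∧ (∫ x, sqnorm x ∂P) ≤ a4 * d ∧
  a5 * d ≤ ∫ x, sqnorm (x - ∫ y, y ∂P) ∂P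

/-- Lipschitz-concentration assumption (Assumption 2.2) with explicit constant `c`:
for every Lipschitz `f : ℝ^d → ℝ`, `P(|f(x) - E f| > t) ≤ 2 exp(-c t² / ‖f‖²_Lip)`. -/
def LipConcentration {d : ℕ} (P : Measure (Fin d → ℝ)) (c : ℝ) : Prop :=
  ∀ (f : (Fin d → ℝ) → ℝ) (Λ : ℝ), 0 < Λ →
    (∀ x y, |f x - f y| ≤ Λ * eunorm (x - y)) →
    ∀ t : ℝ, 0 < t →
      (P {x | t < |f x - ∫ y, f y ∂P|}).toReal ≤ 2 * Real.exp (-(c * t ^ 2) / Λ ^ 2)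

/-- The `r`-th Hermite coefficient of the ReLU function; for even `r ≥ 2` it is
`(1/√(2π)) (-1)^{(r-2)/2} (r-3)!! / √(r!)`. -/
def hermiteCoeffReLU (r : ℕ) : ℝ :=
  if r = 0 then 1 / Real.sqrt (2 * Real.pi)
  else if r = 1 then 1 / 2
  else if Even r then
    (1 / Real.sqrt (2 * Real.pi)) * (-1 : ℝ) ^ ((r - 2) / 2) *
      (Nat.doubleFactorial (r - 3) : ℝ) / Real.sqrt (Nat.factorial r)
  else 0

/-- Minimum of `n` over `{a, …, b}`. -/
def minOver (n : ℕ → ℕ) (a b : ℕ) : ℕ := sInf (n '' Set.Icc a b)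

/-- Minimum width among the layers `0, 1, …, k`. -/
def minWidth (n : ℕ → ℕ) (k : ℕ) : ℕ := minOver n 0 k

/-- A polyhedron: an intersection of finitely many closed half-spaces. -/
def IsPolyhedron {m : ℕ} (P : Set (Fin m → ℝ)) : Prop :=
  ∃ (T : ℕ) (a : Fin T → Fin m → ℝ) (cc : Fin T → ℝ),
    P = {x | ∀ t, ∑ i, a t i * x i ≤ cc t}

namespace PwlAux

lemma eunorm_eq {k : ℕ} (x : Fin k → ℝ) :
    eunorm x = ‖(WithLp.equiv 2 (Fin k → ℝ)).symm x‖ := by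
  rw [EuclideanSpace.norm_eq]
  simp [eunorm, sqnorm, Real.norm_eq_abs, sq_abs]

lemma eunorm_nonneg {k : ℕ} (x : Fin k → ℝ) : 0 ≤ eunorm x := Real.sqrt_nonneg _

lemma eunorm_sub_swap {k : ℕ} (a b : Fin k → ℝ) : eunorm (a - b) = eunorm (b - a) := by
  simp only [eunorm_eq, WithLp.equiv_symm_apply, WithLp.toLp_sub]; exact norm_sub_rev _ _

lemma eunorm_sub_le {k : ℕ} (a b c : Fin k → ℝ) :
    eunorm (a - c) ≤ eunorm (a - b) + eunorm (b - c) := by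
  simp only [eunorm_eq, WithLp.equiv_symm_apply, WithLp.toLp_sub]
  exact norm_sub_le_norm_sub_add_norm_sub _ _ _

lemma eunorm_smul {k : ℕ} (c : ℝ) (u : Fin k → ℝ) : eunorm (c • u) = |c| * eunorm u := by
  simp only [eunorm_eq, WithLp.equiv_symm_apply, WithLp.toLp_smul, norm_smul, Real.norm_eq_abs]

lemma coord_le_eunorm {k : ℕ} (u : Fin k → ℝ) (a : Fin k) : |u a| ≤ eunorm u := by
  rw [← Real.sqrt_sq_eq_abs]
  exact Real.sqrt_le_sqrt (Finset.single_le_sum (fun i _ => sq_nonneg (u i)) (Finset.mem_univ a))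

lemma nhds_eunorm {k : ℕ} {P : Set (Fin k → ℝ)} {z : Fin k → ℝ} (h : P ∈ nhds z) :
    ∃ ε > 0, ∀ w, eunorm (w - z) < ε → w ∈ P := by
  rcases Metric.mem_nhds_iff.1 h with ⟨ε, hε, hball⟩
  refine ⟨ε, hε, fun w hw => hball ?_⟩
  rw [Metric.mem_ball]
  refine lt_of_le_of_lt ?_ hw
  rw [dist_pi_le_iff (eunorm_nonneg _)]
  intro b
  rw [Real.dist_eq]
  exact coord_le_eunorm (w - z) b

lemma poly_closed {k : ℕ} {P : Set (Fin k → ℝ)} (h : IsPolyhedron P) : IsClosed P := by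
  obtain ⟨S, a, cc, rfl⟩ := h
  have : {x : Fin k → ℝ | ∀ t, ∑ i, a t i * x i ≤ cc t}
      = ⋂ t, {x : Fin k → ℝ | ∑ i, a t i * x i ≤ cc t} := by ext x; simp
  rw [this]
  exact isClosed_iInter fun t => isClosed_le
    (continuous_finset_sum _ fun i _ => (continuous_const.mul (continuous_apply i)))
    continuous_const

lemma clm_apply {m k : ℕ} (A : Fin m → Fin k → ℝ) (x : EuclideanSpace ℝ (Fin k)) :
    ‖(LinearMap.toContinuousLinearMap (Matrix.toEuclideanLin (Matrix.of A))) x‖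
      = eunorm (fun i => ∑ j, A i j * (WithLp.equiv 2 (Fin k → ℝ)) x j) := by
  rw [LinearMap.coe_toContinuousLinearMap', Matrix.toEuclideanLin_apply, eunorm_eq]
  have : (Matrix.of A).mulVec ((WithLp.equiv 2 (Fin k → ℝ)) x)
      = fun i => ∑ j, A i j * (WithLp.equiv 2 (Fin k → ℝ)) x j := by
    funext i; simp [Matrix.mulVec, dotProduct, Matrix.of_apply]
  exact congrArg (fun v => ‖WithLp.toLp 2 v‖) this

lemma opNorm_eq_norm {m k : ℕ} (A : Fin m → Fin k → ℝ) :
    opNorm A = ‖(LinearMap.toContinuousLinearMap (Matrix.toEuclideanLin (Matrix.of A)))‖ := by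
  rw [ContinuousLinearMap.norm_def, opNorm]
  congr 1
  ext c
  simp only [Set.mem_setOf_eq]
  refine and_congr_right fun _ => ⟨fun h x => ?_, fun h v => ?_⟩
  · rw [clm_apply]
    have h2 := h ((WithLp.equiv 2 (Fin k → ℝ)) x)
    rwa [eunorm_eq ((WithLp.equiv 2 (Fin k → ℝ)) x), Equiv.symm_apply_apply] at h2
  · have h2 := h ((WithLp.equiv 2 (Fin k → ℝ)).symm v)
    rw [clm_apply, Equiv.apply_symm_apply] at h2
    rwa [eunorm_eq v]

lemma opNorm_nonneg {m k : ℕ} (A : Fin m → Fin k → ℝ) : 0 ≤ opNorm A := by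
  rw [opNorm_eq_norm]; exact norm_nonneg _

lemma eunorm_mulVec_le {m k : ℕ} (A : Fin m → Fin k → ℝ) (v : Fin k → ℝ) :
    eunorm (fun i => ∑ j, A i j * v j) ≤ opNorm A * eunorm v := by
  have h := (LinearMap.toContinuousLinearMap
    (Matrix.toEuclideanLin (Matrix.of A))).le_opNorm ((WithLp.equiv 2 (Fin k → ℝ)).symm v)
  rw [clm_apply, Equiv.apply_symm_apply] at h
  rwa [opNorm_eq_norm, eunorm_eq v]

lemma opNorm_le {m k : ℕ} (A : Fin m → Fin k → ℝ) {c : ℝ} (h0 : 0 ≤ c)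
    (h : ∀ v : Fin k → ℝ, eunorm (fun i => ∑ j, A i j * v j) ≤ c * eunorm v) :
    opNorm A ≤ c :=
  csInf_le ⟨0, fun _ hb => hb.1⟩ ⟨h0, h⟩

end PwlAux

open PwlAux

/-- equation (19) in the proof of Lemma 6.1: the Lipschitz constant of
a piecewise linear map equals the largest operator norm of its pieces. If
`g : ℝ^n → ℝ^m` coincides with `x ↦ A_i x` on polyhedra `P_i` that cover `ℝ^n`, have
nonempty interiors, and have pairwise disjoint interiors, then
`‖g‖_Lip = max_{i∈[T]} ‖A_i‖_op` (Euclidean norms). -/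
theorem pwl_lipschitz_eq_max_opnorm
    (nn m T : ℕ)
    (g : (Fin nn → ℝ) → (Fin m → ℝ))
    (Poly : Fin T → Set (Fin nn → ℝ))
    (A : Fin T → Fin m → Fin nn → ℝ)
    (hpoly : ∀ i, IsPolyhedron (Poly i))
    (hcover : (⋃ i, Poly i) = Set.univ)
    (hint : ∀ i, (interior (Poly i)).Nonempty)
    (hdisj : ∀ i j, i ≠ j → interior (Poly i) ∩ interior (Poly j) = ∅)
    (hlin : ∀ i, ∀ x ∈ Poly i, ∀ j, g x j = ∑ a, A i j a * x a) :
    lipC g = ⨆ i, opNorm (A i) := by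
  have hne : Nonempty (Fin T) := by
    have h0 : (0 : Fin nn → ℝ) ∈ ⋃ i, Poly i := hcover ▸ Set.mem_univ _
    obtain ⟨i, -⟩ := Set.mem_iUnion.1 h0
    exact ⟨i⟩
  set C := ⨆ i, opNorm (A i) with hCdef
  have hC : ∀ i, opNorm (A i) ≤ C := by
    intro i; rw [hCdef]
    exact le_ciSup (Set.Finite.bddAbove (Set.finite_range fun j => opNorm (A j))) i
  have hC0 : 0 ≤ C := le_trans (opNorm_nonneg _) (hC hne.some)
  -- linearity of differences within a single piece
  have hdiff : ∀ i, ∀ x ∈ Poly i, ∀ y ∈ Poly i,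
      g x - g y = fun j => ∑ a, A i j a * ((x - y) a) := by
    intro i x hx y hy
    funext j
    simp only [Pi.sub_apply, hlin i x hx j, hlin i y hy j]
    rw [← Finset.sum_sub_distrib]
    exact Finset.sum_congr rfl fun a _ => by ring
  -- local Lipschitz bound centered at each point
  have key_local : ∀ x : Fin nn → ℝ, ∃ ε > 0, ∀ w, eunorm (w - x) < ε →
      eunorm (g w - g x) ≤ C * eunorm (w - x) := by
    intro x
    set K := ⋃ i ∈ {i : Fin T | x ∉ Poly i}, Poly i with hK
    have hKc : IsClosed K :=
      Set.Finite.isClosed_biUnion (Set.toFinite _) (fun i _ => poly_closed (hpoly i))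
    have hxK : x ∈ Kᶜ := by
      intro hx
      obtain ⟨i, hi, hxi⟩ := Set.mem_iUnion₂.1 hx
      exact hi hxi
    obtain ⟨ε, hε, hball⟩ := nhds_eunorm (hKc.isOpen_compl.mem_nhds hxK)
    refine ⟨ε, hε, fun w hw => ?_⟩
    have hwK : w ∈ Kᶜ := hball w hw
    have hwU : w ∈ ⋃ i, Poly i := hcover ▸ Set.mem_univ _
    obtain ⟨i, hwi⟩ := Set.mem_iUnion.1 hwU
    have hxi : x ∈ Poly i := by
      by_contra hxni
      exact hwK (Set.mem_iUnion₂.2 ⟨i, hxni, hwi⟩)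
    rw [hdiff i w hwi x hxi]
    exact le_trans (eunorm_mulVec_le (A i) (w - x))
      (mul_le_mul_of_nonneg_right (hC i) (eunorm_nonneg _))
  -- global Lipschitz bound with constant C, via a segment argument
  have main : ∀ x y : Fin nn → ℝ, eunorm (g x - g y) ≤ C * eunorm (x - y) := by
    intro x y
    set D := C * eunorm (y - x) with hDdef
    set γ : ℝ → (Fin nn → ℝ) := fun t => x + t • (y - x) with hγdef
    have hγ : ∀ s t : ℝ, γ s - γ t = (s - t) • (y - x) := by
      intro s t; funext a
      simp only [hγdef, Pi.sub_apply, Pi.add_apply, Pi.smul_apply, smul_eq_mul]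
      ring
    have hγnorm : ∀ s t : ℝ, eunorm (γ s - γ t) = |s - t| * eunorm (y - x) := by
      intro s t; rw [hγ, eunorm_smul]
    have hD0 : 0 ≤ D := mul_nonneg hC0 (eunorm_nonneg _)
    set S := {t : ℝ | t ∈ Set.Icc (0:ℝ) 1 ∧ eunorm (g (γ t) - g (γ 0)) ≤ D * t} with hSdef
    have h0S : (0:ℝ) ∈ S := by
      refine ⟨⟨le_refl 0, zero_le_one⟩, ?_⟩
      simp [eunorm, sqnorm]
    have hbdd : BddAbove S := ⟨1, fun t ht => ht.1.2⟩
    set t0 := sSup S with ht0def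
    have ht0Icc : t0 ∈ Set.Icc (0:ℝ) 1 :=
      ⟨le_csSup hbdd h0S, csSup_le ⟨0, h0S⟩ (fun t ht => ht.1.2)⟩
    obtain ⟨ε, hε, hloc⟩ := key_local (γ t0)
    set δ := ε / (eunorm (y - x) + 1) with hδdef
    have hNpos : (0:ℝ) < eunorm (y - x) + 1 := by
      have := eunorm_nonneg (y - x); linarith
    have hδ : 0 < δ := div_pos hε hNpos
    have hδε : δ * (eunorm (y - x) + 1) = ε := div_mul_cancel₀ ε (ne_of_gt hNpos)
    have hnear : ∀ s : ℝ, |s - t0| < δ →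
        eunorm (g (γ s) - g (γ t0)) ≤ D * |s - t0| := by
      intro s hs
      have h1 : eunorm (γ s - γ t0) < ε := by
        rw [hγnorm]
        have hN := eunorm_nonneg (y - x)
        nlinarith [abs_nonneg (s - t0)]
      have h2 := hloc (γ s) h1
      rw [hγnorm] at h2
      calc eunorm (g (γ s) - g (γ t0)) ≤ C * (|s - t0| * eunorm (y - x)) := h2
        _ = D * |s - t0| := by rw [hDdef]; ring
    have ht0S : t0 ∈ S := by
      refine ⟨ht0Icc, ?_⟩
      obtain ⟨s, hsS, hs⟩ := exists_lt_of_lt_csSup ⟨0, h0S⟩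
        (show t0 - δ < t0 by linarith)
      have hsle : s ≤ t0 := le_csSup hbdd hsS
      have h3 : eunorm (g (γ t0) - g (γ s)) ≤ D * (t0 - s) := by
        have h4 := hnear s (by rw [abs_of_nonpos (by linarith)]; linarith)
        rw [eunorm_sub_swap] at h4
        rwa [abs_of_nonpos (by linarith), neg_sub] at h4
      calc eunorm (g (γ t0) - g (γ 0))
          ≤ eunorm (g (γ t0) - g (γ s)) + eunorm (g (γ s) - g (γ 0)) :=
            eunorm_sub_le _ _ _
        _ ≤ D * (t0 - s) + D * s := add_le_add h3 hsS.2
        _ = D * t0 := by ring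
    have ht1 : t0 = 1 := by
      by_contra hne1
      have hlt : t0 < 1 := lt_of_le_of_ne ht0Icc.2 hne1
      set s := min (t0 + δ / 2) 1 with hsdef
      have hs1 : t0 < s := lt_min (by linarith) hlt
      have hs2 : s ∈ Set.Icc (0:ℝ) 1 := ⟨le_trans ht0Icc.1 hs1.le, min_le_right _ _⟩
      have hsub : s - t0 ≤ δ / 2 := by
        have := min_le_left (t0 + δ / 2) 1
        rw [hsdef]; linarith
      have hs3 : |s - t0| < δ := by
        rw [abs_of_nonneg (by linarith)]; linarith
      have hsS : s ∈ S := by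
        refine ⟨hs2, ?_⟩
        calc eunorm (g (γ s) - g (γ 0))
            ≤ eunorm (g (γ s) - g (γ t0)) + eunorm (g (γ t0) - g (γ 0)) :=
              eunorm_sub_le _ _ _
          _ ≤ D * |s - t0| + D * t0 := add_le_add (hnear s hs3) ht0S.2
          _ = D * s := by rw [abs_of_nonneg (by linarith)]; ring
      exact absurd (le_csSup hbdd hsS) (not_le.2 hs1)
    have hfin := ht0S.2
    rw [ht1, mul_one] at hfin
    have hγ1 : γ 1 = y := by
      funext a
      simp only [hγdef, Pi.add_apply, Pi.smul_apply, Pi.sub_apply, smul_eq_mul, one_mul]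
      ring
    have hγ0 : γ 0 = x := by
      funext a
      simp only [hγdef, Pi.add_apply, Pi.smul_apply, Pi.sub_apply, smul_eq_mul, zero_mul]
      ring
    rw [hγ1, hγ0] at hfin
    rw [eunorm_sub_swap (g x) (g y), eunorm_sub_swap x y]
    exact hfin
  -- lower bound: every Lipschitz constant of g dominates every opNorm (A i)
  have lower : ∀ c ∈ {c : ℝ | 0 ≤ c ∧ ∀ x y, eunorm (g x - g y) ≤ c * eunorm (x - y)},
      C ≤ c := by
    rintro c ⟨hc0, hc⟩
    haveI := hne
    refine ciSup_le fun i => opNorm_le (A i) hc0 fun v => ?_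
    obtain ⟨z, hz⟩ := hint i
    have hzP : z ∈ Poly i := interior_subset hz
    obtain ⟨ε, hε, hball⟩ := nhds_eunorm (mem_interior_iff_mem_nhds.1 hz)
    have hNpos : (0:ℝ) < eunorm v + 1 := by have := eunorm_nonneg v; linarith
    set t := ε / (2 * (eunorm v + 1)) with htdef
    have ht : 0 < t := div_pos hε (by linarith)
    have htv : t * eunorm v < ε := by
      have h1 : t * (2 * (eunorm v + 1)) = ε :=
        div_mul_cancel₀ ε (by positivity)
      nlinarith [eunorm_nonneg v]
    have hsub : (z + t • v) - z = t • v := by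
      funext a
      simp only [Pi.sub_apply, Pi.add_apply, Pi.smul_apply, smul_eq_mul]
      ring
    have hw : z + t • v ∈ Poly i := by
      apply hball
      rw [hsub, eunorm_smul, abs_of_pos ht]
      exact htv
    have hgd := hdiff i (z + t • v) hw z hzP
    rw [hsub] at hgd
    have hlhs : (fun j => ∑ a, A i j a * ((t • v) a))
        = t • (fun j => ∑ a, A i j a * v a) := by
      funext j
      simp only [Pi.smul_apply, smul_eq_mul, Finset.mul_sum]
      exact Finset.sum_congr rfl fun a _ => by ring
    have h5 := hc (z + t • v) z
    rw [hgd, hlhs, hsub, eunorm_smul, eunorm_smul, abs_of_pos ht] at h5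
    have h6 : t * eunorm (fun j => ∑ a, A i j a * v a) ≤ t * (c * eunorm v) := by
      calc t * eunorm (fun j => ∑ a, A i j a * v a) ≤ c * (t * eunorm v) := h5
        _ = t * (c * eunorm v) := by ring
    exact le_of_mul_le_mul_left h6 ht
  have hmem : C ∈ {c : ℝ | 0 ≤ c ∧ ∀ x y, eunorm (g x - g y) ≤ c * eunorm (x - y)} :=
    ⟨hC0, main⟩
  rw [lipC]
  exact le_antisymm (csInf_le ⟨0, fun _ hb => hb.1⟩ hmem) (le_csInf ⟨C, hmem⟩ lower)
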